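/- Let a < b be reals, let x_1, …, x_n ∈ [a, b], and let p_1, …, p_n ≥ 0 with Σ p_i = 1; write m := Σ_{i=1}^n p_i x_i for the mean. Then the mean absolute deviation satisfies Σ_{i=1}^n p_i |x_i − m| ≤ 2(b − m)(m − a)/(b − a). Moreover, equality holds if and only if for every i with p_i > 0 one has x_i ∈ {a, b}. -/

import Mathlib

open Finset

/-- Bhatia–Davis-type inequality for the mean absolute deviation: if
`x_i ∈ [a, b]` and `p` is a probability vector with mean `m = Σ p_i x_i`, then
`Σ p_i |x_i − m| ≤ 2(b − m)(m − a)/(b − a)`, with equality iff every outcome with positive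
probability lies in `{a, b}`. -/
theorem stmt_10 (n : ℕ) (a b : ℝ) (hab : a < b)
    (x : Fin n → ℝ) (hx : ∀ i, x i ∈ Set.Icc a b)
    (p : Fin n → ℝ) (hp : ∀ i, 0 ≤ p i) (hp1 : ∑ i, p i = 1)
    (m : ℝ) (hm : m = ∑ i, p i * x i) :
    (∑ i, p i * |x i - m| ≤ 2 * (b - m) * (m - a) / (b - a)) ∧
    ((∑ i, p i * |x i - m| = 2 * (b - m) * (m - a) / (b - a)) ↔
      ∀ i, 0 < p i → x i = a ∨ x i = b) := by
  have hba : (0:ℝ) < b - a := sub_pos.mpr hab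
  have hma : a ≤ m := by
    rw [hm]
    calc a = ∑ i, p i * a := by rw [← Finset.sum_mul, hp1, one_mul]
    _ ≤ ∑ i, p i * x i :=
      Finset.sum_le_sum fun i _ => mul_le_mul_of_nonneg_left (hx i).1 (hp i)
  have hmb : m ≤ b := by
    rw [hm]
    calc ∑ i, p i * x i ≤ ∑ i, p i * b :=
      Finset.sum_le_sum fun i _ => mul_le_mul_of_nonneg_left (hx i).2 (hp i)
    _ = b := by rw [← Finset.sum_mul, hp1, one_mul]
  set g : Fin n → ℝ := fun i => (x i - a) * (b - m) + (b - x i) * (m - a) with hg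
  have hsum : ∑ i, p i * g i = 2 * (b - m) * (m - a) := by
    have h1 : ∑ i, p i * g i
        = ((b - m) - (m - a)) * (∑ i, p i * x i) + (b * (m - a) - a * (b - m)) * (∑ i, p i) := by
      rw [Finset.mul_sum, Finset.mul_sum, ← Finset.sum_add_distrib]
      exact Finset.sum_congr rfl fun i _ => by simp only [hg]; ring
    rw [h1, ← hm, hp1]; ring
  have hpt : ∀ i, p i * |x i - m| * (b - a) ≤ p i * g i := by
    intro i
    have h1 : |x i - m| * (b - a) ≤ g i := by
      rcases abs_cases (x i - m) with ⟨h, h'⟩ | ⟨h, h'⟩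
      · rw [h]; simp only [hg]; nlinarith [(hx i).1, (hx i).2]
      · rw [h]; simp only [hg]; nlinarith [(hx i).1, (hx i).2]
    calc p i * |x i - m| * (b - a) = p i * (|x i - m| * (b - a)) := by ring
    _ ≤ p i * g i := mul_le_mul_of_nonneg_left h1 (hp i)
  have hineq : ∑ i, p i * |x i - m| ≤ 2 * (b - m) * (m - a) / (b - a) := by
    rw [le_div_iff₀ hba, Finset.sum_mul]
    calc ∑ i, p i * |x i - m| * (b - a) ≤ ∑ i, p i * g i := Finset.sum_le_sum fun i _ => hpt i
    _ = 2 * (b - m) * (m - a) := hsum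
  refine ⟨hineq, ?_⟩
  have hiff1 : (∑ i, p i * |x i - m| = 2 * (b - m) * (m - a) / (b - a)) ↔
      ∑ i, (p i * g i - p i * |x i - m| * (b - a)) = 0 := by
    rw [Finset.sum_sub_distrib, hsum, ← Finset.sum_mul, eq_div_iff hba.ne']
    constructor <;> intro h <;> linarith
  have hiff2 : (∑ i, (p i * g i - p i * |x i - m| * (b - a)) = 0) ↔
      ∀ i ∈ Finset.univ, p i * g i - p i * |x i - m| * (b - a) = 0 :=
    Finset.sum_eq_zero_iff_of_nonneg fun i _ => sub_nonneg.mpr (hpt i)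
  rw [hiff1, hiff2]
  constructor
  · intro hz i hpi
    have hterm := hz i (Finset.mem_univ i)
    have heq : g i = |x i - m| * (b - a) := by
      have : p i * (g i - |x i - m| * (b - a)) = 0 := by linarith
      have h2 := (mul_eq_zero.mp this).resolve_left hpi.ne'
      linarith
    -- handle degenerate cases m = a or m = b
    rcases hma.eq_or_lt with hma' | hma'
    · -- m = a : all x_i with p_i > 0 equal a
      left
      have hsz : ∑ j, p j * (x j - a) = 0 := by
        calc ∑ j, p j * (x j - a) = ∑ j, (p j * x j - p j * a) := by
              exact Finset.sum_congr rfl fun j _ => by ring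
        _ = (∑ j, p j * x j) - ∑ j, p j * a := Finset.sum_sub_distrib _ _
        _ = m - a := by rw [← hm, ← Finset.sum_mul, hp1, one_mul]
        _ = 0 := by rw [← hma']; ring
      have h0 := (Finset.sum_eq_zero_iff_of_nonneg
        (fun j _ => mul_nonneg (hp j) (sub_nonneg.mpr (hx j).1))).mp hsz i (Finset.mem_univ i)
      have := (mul_eq_zero.mp h0).resolve_left hpi.ne'
      linarith
    rcases hmb.eq_or_lt with hmb' | hmb'
    · right
      have hsz : ∑ j, p j * (b - x j) = 0 := by
        calc ∑ j, p j * (b - x j) = ∑ j, (p j * b - p j * x j) := by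
              exact Finset.sum_congr rfl fun j _ => by ring
        _ = (∑ j, p j * b) - ∑ j, p j * x j := Finset.sum_sub_distrib _ _
        _ = b - m := by rw [← hm, ← Finset.sum_mul, hp1, one_mul]
        _ = 0 := by rw [hmb']; ring
      have h0 := (Finset.sum_eq_zero_iff_of_nonneg
        (fun j _ => mul_nonneg (hp j) (sub_nonneg.mpr (hx j).2))).mp hsz i (Finset.mem_univ i)
      have := (mul_eq_zero.mp h0).resolve_left hpi.ne'
      linarith
    · -- a < m < b
      rcases le_total (x i) m with hxm | hxm
      · left
        have habs : |x i - m| = m - x i := by rw [abs_of_nonpos (by linarith)]; ring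
        rw [habs] at heq
        have h0 : (x i - a) * (b - m) = 0 := by
          simp only [hg] at heq; linear_combination heq / 2
        have := (mul_eq_zero.mp h0).resolve_right (by linarith)
        linarith
      · right
        have habs : |x i - m| = x i - m := abs_of_nonneg (by linarith)
        rw [habs] at heq
        have h0 : (b - x i) * (m - a) = 0 := by
          simp only [hg] at heq; linear_combination heq / 2
        have := (mul_eq_zero.mp h0).resolve_right (by linarith)
        linarith
  · intro hz i _
    rcases (hp i).eq_or_lt with hpi | hpi
    · rw [← hpi]; ring
    rcases hz i hpi with hxa | hxb
    · rw [hxa]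
      have habs : |a - m| = m - a := by rw [abs_of_nonpos (by linarith)]; ring
      rw [habs]; simp only [hg, hxa]; ring
    · rw [hxb]
      have habs : |b - m| = b - m := abs_of_nonneg (by linarith)
      rw [habs]; simp only [hg, hxb]; ring
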